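/- There exists a function f: ℝ → ℝ and a point x̄ = 0 such that f is continuous at x̄ in direction u = 1 (i.e., f(x) → f(0) as x → 0 along positive directions), but f is not locally lower semicontinuous at x̄ in direction u = 1, i.e., for all ε, δ > 0, the set epi f ∩ ([0, ε] × [f(0) − ε, f(0) + ε]) is not closed. A witness is f(x) = |x| if x is a nonzero rational number and f(x) = 0 otherwise. -/

import Mathlib

open Filter Topology

noncomputable section

abbrev Euc (n : ℕ) := EuclideanSpace ℝ (Fin n)

/-- The directional neighborhood 𝒱_{ε,δ}(d). -/
def dirNbhd {n : ℕ} (ε δ : ℝ) (d : Euc n) : Set (Euc n) :=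
  {z | ‖z‖ < ε ∧ ‖‖d‖ • z - ‖z‖ • d‖ ≤ δ * (‖z‖ * ‖d‖)}

/-- The translated directional neighborhood xb + 𝒱_{ε,δ}(d). -/
def dirNbhdPt {n : ℕ} (xb : Euc n) (ε δ : ℝ) (d : Euc n) : Set (Euc n) :=
  (fun z => xb + z) '' dirNbhd ε δ d

/-- xₖ → xb in direction u : xₖ = xb + tₖ • uₖ with tₖ ↓ 0, uₖ → u. -/
def TendstoDir {n : ℕ} (x : ℕ → Euc n) (xb u : Euc n) : Prop :=
  ∃ t : ℕ → ℝ, ∃ v : ℕ → Euc n,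
    (∀ k, 0 < t k) ∧ Tendsto t atTop (𝓝 0) ∧ Tendsto v atTop (𝓝 u) ∧
    ∀ k, x k = xb + t k • v k

/-- The tangent (contingent) cone. -/
def tangentConeSeq {n : ℕ} (Ω : Set (Euc n)) (xb : Euc n) : Set (Euc n) :=
  {d | ∃ t : ℕ → ℝ, ∃ dk : ℕ → Euc n,
    (∀ k, 0 < t k) ∧ Tendsto t atTop (𝓝 0) ∧ Tendsto dk atTop (𝓝 d) ∧
    ∀ k, xb + t k • dk k ∈ Ω}

/-- The regular (Fréchet) normal cone; empty at points outside Ω. -/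
def regNormal {n : ℕ} (Ω : Set (Euc n)) (x : Euc n) : Set (Euc n) :=
  {ζ | x ∈ Ω ∧ ∀ ε > (0:ℝ), ∃ ρ > (0:ℝ), ∀ y ∈ Ω, ‖y - x‖ < ρ →
    (@inner ℝ _ _ ζ (y - x)) ≤ ε * ‖y - x‖}

/-- The limiting (Mordukhovich) normal cone. -/
def limNormal {n : ℕ} (Ω : Set (Euc n)) (xb : Euc n) : Set (Euc n) :=
  {ζ | ∃ xk : ℕ → Euc n, ∃ ζk : ℕ → Euc n,
    Tendsto xk atTop (𝓝 xb) ∧ Tendsto ζk atTop (𝓝 ζ) ∧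
    ∀ k, ζk k ∈ regNormal Ω (xk k)}

/-- The directional limiting normal cone N_Ω(xb; d). -/
def dirNormal {n : ℕ} (Ω : Set (Euc n)) (xb d : Euc n) : Set (Euc n) :=
  {ζ | ∃ t : ℕ → ℝ, ∃ dk ζk : ℕ → Euc n,
    (∀ k, 0 < t k) ∧ Tendsto t atTop (𝓝 0) ∧ Tendsto dk atTop (𝓝 d) ∧
    Tendsto ζk atTop (𝓝 ζ) ∧ ∀ k, ζk k ∈ regNormal Ω (xb + t k • dk k)}

/-- The regular (Fréchet) subdifferential of an extended-real-valued function. -/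
def regSubdiff {n : ℕ} (f : Euc n → EReal) (x : Euc n) : Set (Euc n) :=
  {ξ | ∀ ε > (0:ℝ), ∃ ρ > (0:ℝ), ∀ y, ‖y - x‖ < ρ →
    f x + (((@inner ℝ _ _ ξ (y - x)) - ε * ‖y - x‖ : ℝ) : EReal) ≤ f y}

/-- The limiting (Mordukhovich) subdifferential. -/
def limSubdiff {n : ℕ} (f : Euc n → EReal) (x : Euc n) : Set (Euc n) :=
  {ξ | ∃ xk ξk : ℕ → Euc n, Tendsto xk atTop (𝓝 x) ∧
    Tendsto (fun k => f (xk k)) atTop (𝓝 (f x)) ∧ Tendsto ξk atTop (𝓝 ξ) ∧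
    ∀ k, ξk k ∈ regSubdiff f (xk k)}

/-- The directional limiting subdifferential ∂f(xb; u). -/
def dirLimSubdiff {n : ℕ} (f : Euc n → EReal) (xb u : Euc n) : Set (Euc n) :=
  {ξ | ∃ xk ξk : ℕ → Euc n, TendstoDir xk xb u ∧
    Tendsto (fun k => f (xk k)) atTop (𝓝 (f xb)) ∧ Tendsto ξk atTop (𝓝 ξ) ∧
    ∀ k, ξk k ∈ regSubdiff f (xk k)}

/-- The directional singular subdifferential ∂^∞ f(xb; u). -/
def dirSingSubdiff {n : ℕ} (f : Euc n → EReal) (xb u : Euc n) : Set (Euc n) :=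
  {ξ | ∃ xk ξk : ℕ → Euc n, ∃ τ : ℕ → ℝ, TendstoDir xk xb u ∧
    (∀ k, 0 < τ k) ∧ Tendsto τ atTop (𝓝 0) ∧
    Tendsto (fun k => τ k • ξk k) atTop (𝓝 ξ) ∧
    Tendsto (fun k => f (xk k)) atTop (𝓝 (f xb)) ∧
    ∀ k, ξk k ∈ regSubdiff f (xk k)}

/-- f is continuous at xb in direction u. -/
def DirContinuous {n : ℕ} (f : Euc n → EReal) (xb u : Euc n) : Prop :=
  ∀ xk : ℕ → Euc n, TendstoDir xk xb u →
    Tendsto (fun k => f (xk k)) atTop (𝓝 (f xb))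

/-- f is locally lower semicontinuous at xb in direction u (with f xb = fx ∈ ℝ). -/
def DirLocLSC {n : ℕ} (f : Euc n → EReal) (xb u : Euc n) (fx : ℝ) : Prop :=
  ∃ ε > (0:ℝ), ∃ δ > (0:ℝ), IsClosed
    ({p : Euc n × ℝ | f p.1 ≤ (p.2 : EReal)} ∩
     (closure (dirNbhdPt xb ε δ u) ×ˢ Metric.closedBall fx ε))

/-- f is Lipschitz continuous around xb in direction u. -/
def DirLipschitz {n : ℕ} (f : Euc n → EReal) (xb u : Euc n) : Prop :=
  ∃ L : ℝ, ∃ ε > (0:ℝ), ∃ δ > (0:ℝ),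
    ∀ a ∈ dirNbhdPt xb ε δ u, ∀ b ∈ dirNbhdPt xb ε δ u,
      ∃ fa fb : ℝ, f a = (fa : EReal) ∧ f b = (fb : EReal) ∧
        |fa - fb| ≤ L * ‖a - b‖

/-- The optimal value function of the parametric problem min f(x,y) s.t. P(x,y) ∈ Γ. -/
def valueFn {n m p : ℕ} (f : Euc n × Euc m → ℝ) (P : Euc n × Euc m → Euc p)
    (Γ : Set (Euc p)) (x : Euc n) : EReal :=
  sInf ((fun y => ((f (x, y) : ℝ) : EReal)) '' {y | P (x, y) ∈ Γ})

/-- The solution map of the parametric problem. -/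
def solnSet {n m p : ℕ} (f : Euc n × Euc m → ℝ) (P : Euc n × Euc m → Euc p)
    (Γ : Set (Euc p)) (x : Euc n) : Set (Euc m) :=
  {y | P (x, y) ∈ Γ ∧ ((f (x, y) : ℝ) : EReal) = valueFn f P Γ x}

/-- The graphical derivative of φ at x in direction u. -/
def graphDeriv {n m : ℕ} (φ : Euc n → Euc m) (x u : Euc n) : Set (Euc m) :=
  {d | ∃ t : ℕ → ℝ, ∃ uk : ℕ → Euc n, (∀ k, 0 < t k) ∧ Tendsto t atTop (𝓝 0) ∧
    Tendsto uk atTop (𝓝 u) ∧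
    Tendsto (fun k => (t k)⁻¹ • (φ (x + t k • uk k) - φ x)) atTop (𝓝 d)}

end
open Classical in
theorem stmt_8 :
    ∃ f : ℝ → ℝ,
      f = (fun x => if x ≠ 0 ∧ (∃ q : ℚ, (q : ℝ) = x) then |x| else 0) ∧
      (∀ xk : ℕ → ℝ,
        (∃ t v : ℕ → ℝ, (∀ k, 0 < t k) ∧ Tendsto t atTop (𝓝 0) ∧
          Tendsto v atTop (𝓝 (1:ℝ)) ∧ ∀ k, xk k = t k * v k) →
        Tendsto (fun k => f (xk k)) atTop (𝓝 (f 0))) ∧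
      ∀ ε > (0:ℝ), ∀ δ > (0:ℝ),
        ¬ IsClosed ({p : ℝ × ℝ | f p.1 ≤ p.2} ∩
          ((Set.Icc (0:ℝ) ε) ×ˢ (Set.Icc (f 0 - ε) (f 0 + ε)))) := by
  
  set f : ℝ → ℝ := fun x => if x ≠ 0 ∧ (∃ q : ℚ, (q : ℝ) = x) then |x| else 0 with hf
  have hf0 : f 0 = 0 := by simp [hf]
  have hbound : ∀ x, ‖f x‖ ≤ |x| := by
    intro x
    by_cases h : x ≠ 0 ∧ (∃ q : ℚ, (q : ℝ) = x) <;> simp [hf, h, abs_nonneg, abs_abs, le_refl]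
  refine ⟨f, rfl, ?_, ?_⟩
  · rintro xk ⟨t, v, ht, htl, hvl, hxk⟩
    rw [hf0]
    apply squeeze_zero_norm (a := fun k => |t k * v k|) (fun k => by rw [hxk k]; exact hbound _)
    have : Tendsto (fun k => t k * v k) atTop (𝓝 (0 * 1)) := htl.mul hvl
    rw [zero_mul] at this
    simpa using this.abs
  · intro ε hε δ hδ h
    obtain ⟨q, hq1, hq2⟩ := exists_rat_btwn (half_lt_self hε)
    set r : ℝ := (q : ℝ) with hr
    have hr0 : 0 < r := lt_trans (half_pos hε) hq1
    have hq0' : (0:ℚ) < q := by exact_mod_cast hr ▸ hr0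
    have hq0 : q ≠ 0 := hq0'.ne'
    set x : ℕ → ℝ := fun n => r - r * Real.sqrt 2 / (2 * (n + 2)) with hx
    have hsqrt2 : Real.sqrt 2 < 2 := by
      nlinarith [Real.sq_sqrt (by norm_num : (2:ℝ) ≥ 0), Real.sqrt_nonneg 2]
    have hsq_pos : 0 < Real.sqrt 2 := Real.sqrt_pos.mpr (by norm_num)
    have hxmem : ∀ n, x n ∈ Set.Ioo 0 r := by
      intro n
      have hd : (0:ℝ) < 2 * ((n:ℝ) + 2) := by positivity
      constructor
      · have : r * Real.sqrt 2 / (2 * (n + 2)) < r := by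
          rw [div_lt_iff₀ hd]
          calc r * Real.sqrt 2 < r * 2 := by nlinarith
            _ ≤ r * (2 * ((n:ℝ) + 2)) := by nlinarith
        simpa [hx] using sub_pos.mpr this
      · have : 0 < r * Real.sqrt 2 / (2 * (n + 2)) := by positivity
        simpa [hx] using sub_lt_self r this
    have hxirr : ∀ n, Irrational (x n) := by
      intro n
      have h1 : Irrational (((q / (2 * (n + 2)) : ℚ) : ℝ) * Real.sqrt 2) :=
        irrational_sqrt_two.ratCast_mul (by positivity)
      have h2 : Irrational ((q : ℝ) - ((q / (2 * (n + 2)) : ℚ) : ℝ) * Real.sqrt 2) := by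
        simpa using h1.ratCast_sub (q := q)
      convert h2 using 1
      rw [hx]; push_cast; ring
    have hxlim : Tendsto x atTop (𝓝 r) := by
      have hden : Tendsto (fun n : ℕ => 2 * ((n:ℝ) + 2)) atTop atTop := by
        apply Tendsto.const_mul_atTop (by norm_num)
        exact tendsto_atTop_add_const_right _ _ tendsto_natCast_atTop_atTop
      have : Tendsto (fun n : ℕ => r * Real.sqrt 2 / (2 * ((n:ℝ) + 2))) atTop (𝓝 0) :=
        Tendsto.div_atTop tendsto_const_nhds hden
      have h2 : Tendsto (fun n : ℕ => r - r * Real.sqrt 2 / (2 * ((n:ℝ) + 2))) atTop (𝓝 (r - 0)) :=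
        Tendsto.sub tendsto_const_nhds this
      simpa [hx] using h2
    have hmem : ∀ n, (x n, (0:ℝ)) ∈ ({p : ℝ × ℝ | f p.1 ≤ p.2} ∩
          ((Set.Icc (0:ℝ) ε) ×ˢ (Set.Icc (f 0 - ε) (f 0 + ε)))) := by
      intro n
      obtain ⟨h1, h2⟩ := hxmem n
      have hfx : f (x n) = 0 := by
        have : ¬ (∃ q' : ℚ, (q' : ℝ) = x n) := by
          rintro ⟨q', hq'⟩; exact (hxirr n) ⟨q', hq'⟩
        simp [hf, this]
      refine ⟨by simp [hfx], ⟨le_of_lt h1, le_of_lt (lt_of_lt_of_le h2 (le_of_lt hq2))⟩, ?_⟩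
      rw [hf0]
      constructor <;> simp <;> linarith
    have hlim : Tendsto (fun n => (x n, (0:ℝ))) atTop (𝓝 (r, 0)) :=
      hxlim.prodMk_nhds tendsto_const_nhds
    have hin := h.mem_of_tendsto hlim (Eventually.of_forall hmem)
    have hfr : f r = r := by
      have : r ≠ 0 := ne_of_gt hr0
      simp [hf, this, abs_of_pos hr0, hr, hq0, abs_of_pos (show (0:ℝ) < (q:ℝ) from hr0)]
    have : f r ≤ 0 := hin.1
    rw [hfr] at this
    linarith
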